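/- Let k be a commutative ring with δ ∈ k, let m ≥ 2, and suppose [m] = 0 and [j] is invertible in k for every 1 ≤ j ≤ m−1. Then Π_{j=1}^{m−1} [⌈j/2⌉]·[j]^{−1} = [m−1]^{⌊(m−1)/2⌋}. (This is the invertible scalar by which the associated polynomial of the Jones–Wenzl projector JW_{m−1} differs from the product of the m positive roots; in the balanced case [m−1] = 1 it equals 1.) -/

import Mathlib

/-- The quantum numbers `[n] ∈ k` attached to `δ ∈ k`:
`[0] = 0`, `[1] = 1`, `[n+1] = δ·[n] − [n−1]`. -/
def qn {k : Type*} [CommRing k] (δ : k) : ℕ → k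
  | 0 => 0
  | 1 => 1
  | n + 2 => δ * qn δ (n + 1) - qn δ n

lemma qn_key {k : Type*} [CommRing k] (δ : k) (m : ℕ) (h0 : qn δ m = 0) :
    ∀ j, j ≤ m → qn δ (m - j) = qn δ (m - 1) * qn δ j
  | 0, _ => by simpa [qn] using h0
  | 1, _ => by simp [qn]
  | (j+2), h => by
      have h1 := qn_key δ m h0 (j+1) (by omega)
      have h2 := qn_key δ m h0 j (by omega)
      have e : m - j = (m - (j+2)) + 2 := by omega
      have e1 : m - (j+1) = (m - (j+2)) + 1 := by omega
      rw [e] at h2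
      rw [e1] at h1
      have hr : qn δ ((m - (j+2)) + 2) = δ * qn δ ((m - (j+2)) + 1) - qn δ (m - (j+2)) := by
        rfl
      rw [hr] at h2
      have hq : qn δ (j+2) = δ * qn δ (j+1) - qn δ j := rfl
      rw [hq]
      linear_combination δ * h1 - h2

lemma prod_half {k : Type*} [CommRing k] (f : ℕ → k) :
    ∀ n, ∏ j ∈ Finset.Ioc 0 n, f ((j + 1) / 2) =
      (∏ i ∈ Finset.Ioc 0 ((n+1)/2), f i) * ∏ i ∈ Finset.Ioc 0 (n/2), f i
  | 0 => by simp
  | (n+1) => by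
      rw [Finset.prod_Ioc_succ_top (by omega), prod_half f n]
      rcases Nat.even_or_odd n with ⟨r, hr⟩ | ⟨r, hr⟩
      · rw [show (n+1+1)/2 = n/2 + 1 by omega, show (n+1)/2 = n/2 by omega,
          Finset.prod_Ioc_succ_top (Nat.zero_le _)]
        ring
      · rw [show (n+1+1)/2 = n/2 + 1 by omega, show (n+1)/2 = n/2 + 1 by omega,
          Finset.prod_Ioc_succ_top (Nat.zero_le _)]
        ring
  termination_by n => n

lemma prod_reflect {k : Type*} [CommRing k] (g : ℕ → k) (n t : ℕ) (ht : t ≤ n) :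
    ∏ j ∈ Finset.Ioc t n, g j = ∏ i ∈ Finset.Ioc 0 (n - t), g (n + 1 - i) := by
  refine Finset.prod_nbij' (fun j => n + 1 - j) (fun i => n + 1 - i) ?_ ?_ ?_ ?_ ?_ <;>
      intro a ha <;> simp only [Finset.mem_Ioc] at ha ⊢ <;>
    first
      | omega
      | (congr 1; omega)

/-- Suppose `m ≥ 2`, `[m] = 0` and each `[j]` for `1 ≤ j ≤ m−1` is invertible, with
inverse `inv j`.  Then `Π_{j=1}^{m−1} [⌈j/2⌉]·[j]⁻¹ = [m−1]^{⌊(m−1)/2⌋}`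
(the scalar relating the associated polynomial of `JW_{m−1}` to the product of the
`m` positive roots). -/
theorem jones_wenzl_scalar {k : Type*} [CommRing k] (δ : k) (m : ℕ)
    (hm : 2 ≤ m) (h0 : qn δ m = 0)
    (inv : ℕ → k) (hinv : ∀ j : ℕ, 1 ≤ j → j ≤ m - 1 → qn δ j * inv j = 1) :
    ∏ j ∈ Finset.Icc 1 (m - 1), qn δ ((j + 1) / 2) * inv j =
      qn δ (m - 1) ^ ((m - 1) / 2) := by
  obtain ⟨n, rfl⟩ : ∃ n, m = n + 1 := ⟨m - 1, by omega⟩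
  simp only [Nat.add_sub_cancel] at hinv ⊢
  have hn : 1 ≤ n := by omega
  set c := qn δ n with hc
  have key : ∀ j ≤ n + 1, qn δ (n + 1 - j) = c * qn δ j := fun j hj => by
    simpa using qn_key δ (n+1) h0 j hj
  have hc2 : c * c = 1 := by
    have := key n (by omega)
    rw [show n + 1 - n = 1 by omega] at this
    simpa [qn] using this.symm
  -- when n is odd, c = 1
  have hodd : Odd n → c = 1 := by
    rintro ⟨r, hr⟩
    have h1 := key (r+1) (by omega)
    rw [show n + 1 - (r+1) = r + 1 by omega] at h1
    have h2 := hinv (r+1) (by omega) (by omega)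
    calc c = c * (qn δ (r+1) * inv (r+1)) := by rw [h2]; ring
      _ = qn δ (r+1) * inv (r+1) := by rw [← mul_assoc, ← h1]
      _ = 1 := h2
  set t := n / 2 with htdef
  have hIcc : Finset.Icc 1 n = Finset.Ioc 0 n := Finset.Icc_add_one_left_eq_Ioc 0 n
  rw [hIcc]
  set Num := ∏ j ∈ Finset.Ioc 0 n, qn δ ((j + 1) / 2) with hNum
  set D := ∏ j ∈ Finset.Ioc 0 n, qn δ j with hD
  set P := ∏ j ∈ Finset.Ioc 0 n, qn δ ((j + 1) / 2) * inv j with hP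
  have step1 : P * D = Num := by
    rw [hP, hD, hNum, ← Finset.prod_mul_distrib]
    refine Finset.prod_congr rfl fun j hj => ?_
    simp only [Finset.mem_Ioc] at hj
    have := hinv j (by omega) hj.2
    calc qn δ ((j + 1) / 2) * inv j * qn δ j
        = qn δ ((j + 1) / 2) * (qn δ j * inv j) := by ring
      _ = qn δ ((j + 1) / 2) := by rw [this, mul_one]
  have step2 : D = c ^ (n - t) * Num := by
    rw [hD, ← Finset.prod_Ioc_consecutive _ (Nat.zero_le t) (Nat.div_le_self n 2),
      prod_reflect _ n t (Nat.div_le_self n 2)]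
    have : ∏ i ∈ Finset.Ioc 0 (n - t), qn δ (n + 1 - i)
        = ∏ i ∈ Finset.Ioc 0 (n - t), c * qn δ i := by
      refine Finset.prod_congr rfl fun i hi => ?_
      simp only [Finset.mem_Ioc] at hi
      exact key i (by omega)
    rw [this, Finset.prod_mul_distrib, Finset.prod_const, Nat.card_Ioc, Nat.sub_zero,
      hNum, prod_half, show (n+1)/2 = n - t by omega]
    ring
  have step3 : ∃ N', Num * N' = 1 := by
    refine ⟨∏ j ∈ Finset.Ioc 0 n, inv ((j + 1) / 2), ?_⟩
    rw [hNum, ← Finset.prod_mul_distrib]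
    rw [Finset.prod_eq_one]
    intro j hj
    simp only [Finset.mem_Ioc] at hj
    exact hinv ((j+1)/2) (by omega) (by omega)
  obtain ⟨N', hN'⟩ := step3
  have step4 : P * c ^ (n - t) = 1 := by
    calc P * c ^ (n - t) = P * c ^ (n - t) * (Num * N') := by rw [hN', mul_one]
      _ = (P * D) * N' := by rw [step2]; ring
      _ = Num * N' := by rw [step1]
      _ = 1 := hN'
  rcases Nat.even_or_odd n with ⟨r, hr⟩ | ho
  · have : n - t = t := by omega
    rw [this] at step4
    have h2t : c ^ t * c ^ t = 1 := by
      rw [← pow_add, ← two_mul, pow_mul, pow_two, hc2, one_pow]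
    calc P = P * (c ^ t * c ^ t) := by rw [h2t, mul_one]
      _ = (P * c ^ t) * c ^ t := by ring
      _ = c ^ t := by rw [step4, one_mul]
  · rw [hodd ho] at step4 ⊢
    simpa using step4
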